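/- Let f ∈ ℂ[x₀,…,xₙ] be a nonzero homogeneous polynomial of degree d ≥ 1 and let r be the minimal integer such that f can be written as a homogeneous polynomial in r linear forms. If f = g(l₁,…,l_r) and f = g'(l'₁,…,l'_r) where l₁,…,l_r are linearly independent linear forms and l'₁,…,l'_r are linearly independent linear forms, then the ℂ-linear span of {l₁,…,l_r} equals the ℂ-linear span of {l'₁,…,l'_r}. In other words, the r-dimensional space of linear forms realizing the minimal expression of f is unique. -/

import Mathlib

open MvPolynomial

noncomputable section Stmt12Aux

variable {n : ℕ}

/-- The linear map sending a coefficient vector to the corresponding linear form. -/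
noncomputable def linStmt (n : ℕ) : (Fin (n + 1) → ℂ) →ₗ[ℂ] MvPolynomial (Fin (n + 1)) ℂ :=
  Fintype.linearCombination ℂ (fun j => (X j : MvPolynomial (Fin (n + 1)) ℂ))

lemma linStmt_apply (v : Fin (n + 1) → ℂ) :
    linStmt n v = ∑ j, v j • (X j : MvPolynomial (Fin (n + 1)) ℂ) := rfl

lemma linStmt_isHomogeneous (v : Fin (n + 1) → ℂ) : (linStmt n v).IsHomogeneous 1 := by
  rw [linStmt_apply]
  apply IsHomogeneous.sum
  intro j _
  rw [smul_eq_C_mul]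
  exact isHomogeneous_C_mul_X _ _

lemma single_of_degree_one (m : Fin (n + 1) →₀ ℕ) (h : Finsupp.degree m = 1) :
    ∃ j, m = Finsupp.single j 1 := by
  have hm : m ≠ 0 := by
    rintro rfl
    simp [map_zero] at h
  obtain ⟨j, hj⟩ : ∃ j, m j ≠ 0 := by
    by_contra hc
    push_neg at hc
    exact hm (Finsupp.ext fun a => hc a)
  have hj1 : m j = 1 := le_antisymm (by have := Finsupp.le_degree j m; omega) (Nat.one_le_iff_ne_zero.mpr hj)
  refine ⟨j, Finsupp.ext fun k => ?_⟩
  rcases eq_or_ne k j with rfl | hk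
  · simp [hj1]
  · have hk0 : m k = 0 := by
      by_contra hknz
      have hsub : ({j, k} : Finset (Fin (n + 1))) ⊆ m.support := by
        intro x hx
        simp only [Finset.mem_insert, Finset.mem_singleton] at hx
        rcases hx with rfl | rfl <;> simp [Finsupp.mem_support_iff, hj, hknz]
      have h2 : m j + m k ≤ Finsupp.degree m := by
        have := Finset.sum_le_sum_of_subset hsub (f := fun x => m x)
        rwa [Finset.sum_pair (Ne.symm hk)] at this
      omega
    simp [hk0, Finsupp.single_apply, Ne.symm hk]

lemma exists_linStmt {p : MvPolynomial (Fin (n + 1)) ℂ} (hp : p.IsHomogeneous 1) :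
    ∃ v, linStmt n v = p := by
  classical
  refine ⟨fun j => coeff (Finsupp.single j 1) p, ?_⟩
  rw [linStmt_apply]
  ext m
  rw [coeff_sum]
  simp_rw [coeff_smul, coeff_X', smul_eq_mul, mul_ite, mul_one, mul_zero]
  by_cases hm : ∃ j, m = Finsupp.single j 1
  · obtain ⟨j₀, rfl⟩ := hm
    have hcond : ∀ j : Fin (n + 1),
        (Finsupp.single j 1 = Finsupp.single j₀ (1 : ℕ)) ↔ j = j₀ :=
      fun j => Finsupp.single_left_inj one_ne_zero
    rw [Finset.sum_congr rfl (fun j _ => if_congr (hcond j) rfl rfl), Finset.sum_ite_eq'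
      Finset.univ j₀ (fun j => coeff (Finsupp.single j 1) p)]
    simp
  · push_neg at hm
    have h0 : coeff m p = 0 := by
      by_contra hc
      have hw := hp hc
      have hdeg : Finsupp.degree m = 1 := by
        rw [Finsupp.degree_eq_weight_one]
        exact hw
      obtain ⟨j, hj⟩ := single_of_degree_one m hdeg
      exact hm j hj
    rw [h0]
    apply Finset.sum_eq_zero
    intro j _
    rw [if_neg]
    intro hEq
    exact hm j hEq.symm

lemma aeval_linStmt {A : Type*} [CommRing A] [Algebra ℂ A]
    (u : Fin (n + 1) → A) (v : Fin (n + 1) → ℂ) :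
    aeval u (linStmt n v) = ∑ j, v j • u j := by
  rw [linStmt_apply, map_sum]
  simp only [map_smul, aeval_X]

lemma sum_single_smul (w : Fin (n + 1) → ℂ) :
    (∑ k, w k • (Pi.single k (1 : ℂ) : Fin (n + 1) → ℂ)) = w := by
  funext x
  simp [Finset.sum_apply, Pi.single_apply, mul_ite]

lemma linStmt_single (i : Fin (n + 1)) :
    linStmt n (Pi.single i (1 : ℂ)) = X i := by
  rw [linStmt_apply]
  simp [Pi.single_apply, ite_smul]

lemma phi_injective (B : Module.Basis (Fin (n + 1)) ℂ (Fin (n + 1) → ℂ)) :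
    Function.Injective
      (aeval (fun j => linStmt n (B j)) :
        MvPolynomial (Fin (n + 1)) ℂ →ₐ[ℂ] MvPolynomial (Fin (n + 1)) ℂ) := by
  classical
  set φ := (aeval (fun j => linStmt n (B j)) :
    MvPolynomial (Fin (n + 1)) ℂ →ₐ[ℂ] MvPolynomial (Fin (n + 1)) ℂ) with hφ
  set ψ := (aeval (fun j => linStmt n (B.equivFun ((Pi.single j (1 : ℂ) : Fin (n + 1) → ℂ)))) :
    MvPolynomial (Fin (n + 1)) ℂ →ₐ[ℂ] MvPolynomial (Fin (n + 1)) ℂ) with hψ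
  have key : ψ.comp φ = AlgHom.id ℂ _ := by
    apply algHom_ext
    intro i
    simp only [AlgHom.comp_apply, AlgHom.id_apply, hφ, aeval_X]
    rw [hψ, aeval_linStmt]
    have h1 : (∑ j, (B i) j • linStmt n (B.equivFun ((Pi.single j (1 : ℂ) : Fin (n + 1) → ℂ)))) =
        linStmt n (B.equivFun (∑ j, (B i) j • (Pi.single j (1 : ℂ) : Fin (n + 1) → ℂ))) := by
      rw [map_sum, map_sum]
      simp only [map_smul]
    rw [h1, sum_single_smul]
    have h2 : B.equivFun (B i) = Pi.single i (1 : ℂ) := by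
      funext j
      rw [B.equivFun_self i j, Pi.single_apply]
      exact if_congr (eq_comm) rfl rfl
    rw [h2, linStmt_single]
  intro a b hab
  have : ψ (φ a) = ψ (φ b) := congrArg ψ hab
  rwa [← AlgHom.comp_apply, ← AlgHom.comp_apply, key, AlgHom.id_apply, AlgHom.id_apply] at this

lemma exists_homog_g {s d : ℕ} (m : Fin s → MvPolynomial (Fin (n + 1)) ℂ)
    (hm : ∀ i, (m i).IsHomogeneous 1) {f : MvPolynomial (Fin (n + 1)) ℂ}
    (hfhom : f.IsHomogeneous d) (g0 : MvPolynomial (Fin s) ℂ) (hf : f = aeval m g0) :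
    ∃ g : MvPolynomial (Fin s) ℂ, g.IsHomogeneous d ∧ f = aeval m g := by
  classical
  set N := max (g0.totalDegree + 1) (d + 1) with hN
  have hg0 : (∑ i ∈ Finset.range N, homogeneousComponent i g0) = g0 := by
    conv_rhs => rw [← sum_homogeneousComponent g0]
    symm
    apply Finset.sum_subset (Finset.range_subset_range.2 (le_max_left _ _))
    intro x _ hx'
    apply homogeneousComponent_eq_zero
    simp only [Finset.mem_range, not_lt] at hx'
    omega
  refine ⟨homogeneousComponent d g0, homogeneousComponent_isHomogeneous d g0, ?_⟩
  have hterm : ∀ i : ℕ, (aeval m (homogeneousComponent i g0)).IsHomogeneous i := by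
    intro i
    have := (homogeneousComponent_isHomogeneous i g0).aeval m hm
    simpa using this
  have hsplit : f = ∑ i ∈ Finset.range N, aeval m (homogeneousComponent i g0) := by
    rw [hf, ← map_sum, hg0]
  have hd' : homogeneousComponent d f = f := by
    rw [homogeneousComponent_of_mem ((mem_homogeneousSubmodule _ _).2 hfhom)]
    simp
  calc f = homogeneousComponent d f := hd'.symm
  _ = ∑ i ∈ Finset.range N, homogeneousComponent d (aeval m (homogeneousComponent i g0)) := by
      conv_lhs => rw [hsplit]
      rw [map_sum]
  _ = ∑ i ∈ Finset.range N, if d = i then aeval m (homogeneousComponent i g0) else 0 :=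
      Finset.sum_congr rfl fun i _ =>
        homogeneousComponent_of_mem ((mem_homogeneousSubmodule _ _).2 (hterm i))
  _ = aeval m (homogeneousComponent d g0) := by
      rw [Finset.sum_ite_eq]
      simp [hN, Nat.lt_of_lt_of_le (Nat.lt_succ_self d) (le_max_right _ _)]

end Stmt12Aux

theorem stmt_12 (n d r : ℕ) (hd : 1 ≤ d)
    (f : MvPolynomial (Fin (n + 1)) ℂ) (hf : f ≠ 0) (hfhom : f.IsHomogeneous d)
    (hr : IsLeast
      {s : ℕ | ∃ l : Fin s → MvPolynomial (Fin (n + 1)) ℂ,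
        (∀ i, (l i).IsHomogeneous 1) ∧
        ∃ g : MvPolynomial (Fin s) ℂ, g.IsHomogeneous d ∧ f = aeval l g} r)
    (l l' : Fin r → MvPolynomial (Fin (n + 1)) ℂ)
    (hl : ∀ i, (l i).IsHomogeneous 1) (hl' : ∀ i, (l' i).IsHomogeneous 1)
    (hli : LinearIndependent ℂ l) (hli' : LinearIndependent ℂ l')
    (g g' : MvPolynomial (Fin r) ℂ) (hg : g.IsHomogeneous d) (hg' : g'.IsHomogeneous d)
    (hfg : f = aeval l g) (hfg' : f = aeval l' g') :
    Submodule.span ℂ (Set.range l) = Submodule.span ℂ (Set.range l') := by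
  classical
  choose v hvl using fun i => exists_linStmt (hl i)
  choose v' hvl' using fun i => exists_linStmt (hl' i)
  have hlv : l = linStmt n ∘ v := funext fun i => (hvl i).symm
  have hlv' : l' = linStmt n ∘ v' := funext fun i => (hvl' i).symm
  have hvi : LinearIndependent ℂ v := LinearIndependent.of_comp (linStmt n) (hlv ▸ hli)
  have hvi' : LinearIndependent ℂ v' := LinearIndependent.of_comp (linStmt n) (hlv' ▸ hli')
  set W : Submodule ℂ (Fin (n + 1) → ℂ) := Submodule.span ℂ (Set.range v) with hW
  set W' : Submodule ℂ (Fin (n + 1) → ℂ) := Submodule.span ℂ (Set.range v') with hW'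
  set U : Submodule ℂ (Fin (n + 1) → ℂ) := W ⊓ W' with hU
  suffices hWW : W = W' by
    rw [hlv, hlv', Set.range_comp, Set.range_comp, ← Submodule.map_span, ← Submodule.map_span,
      ← hW, ← hW', hWW]
  -- choose an independent set spanning U
  obtain ⟨sU, hsUsub, hsUspan, hsUind⟩ := exists_linearIndependent ℂ (↑U : Set (Fin (n + 1) → ℂ))
  have hUspan : Submodule.span ℂ sU = U := by rw [hsUspan, Submodule.span_eq]
  have hsUW : sU ⊆ (↑W : Set (Fin (n + 1) → ℂ)) := fun x hx => (hsUsub hx).1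
  have hsUW' : sU ⊆ (↑W' : Set (Fin (n + 1) → ℂ)) := fun x hx => (hsUsub hx).2
  -- extend to independent spanning sets of W and W'
  set sW : Set (Fin (n + 1) → ℂ) := LinearIndepOn.extend (v := id) hsUind hsUW with hsW
  set sW' : Set (Fin (n + 1) → ℂ) := LinearIndepOn.extend (v := id) hsUind hsUW' with hsW'
  have hsWind : LinearIndependent ℂ ((↑) : sW → (Fin (n + 1) → ℂ)) := LinearIndepOn.linearIndepOn_extend (v := id) hsUind hsUW
  have hsW'ind : LinearIndependent ℂ ((↑) : sW' → (Fin (n + 1) → ℂ)) := LinearIndepOn.linearIndepOn_extend (v := id) hsUind hsUW'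
  have hsWspan : Submodule.span ℂ sW = W := by
    rw [hsW, LinearIndepOn.span_extend_eq_span hsUind hsUW, Submodule.span_eq]
  have hsW'span : Submodule.span ℂ sW' = W' := by
    rw [hsW', LinearIndepOn.span_extend_eq_span hsUind hsUW', Submodule.span_eq]
  have hsWsub : sW ⊆ (↑W : Set (Fin (n + 1) → ℂ)) := LinearIndepOn.extend_subset (v := id) hsUind hsUW
  have hsW'sub : sW' ⊆ (↑W' : Set (Fin (n + 1) → ℂ)) := LinearIndepOn.extend_subset (v := id) hsUind hsUW'
  have hUsW : sU ⊆ sW := LinearIndepOn.subset_extend (v := id) hsUind hsUW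
  have hUsW' : sU ⊆ sW' := LinearIndepOn.subset_extend (v := id) hsUind hsUW'
  -- the union is linearly independent
  have hdisj2 : Disjoint (Submodule.span ℂ (sW' ∩ sW)) (Submodule.span ℂ (sW' \ sW)) := by
    have him := hsW'ind.disjoint_span_image
      (s := {x : sW' | (x : Fin (n + 1) → ℂ) ∈ sW}) (t := {x : sW' | (x : Fin (n + 1) → ℂ) ∉ sW})
      (by simp [Set.disjoint_left])
    have h1 : (↑) '' {x : sW' | (x : Fin (n + 1) → ℂ) ∈ sW} = sW' ∩ sW := by
      ext x
      simp [Set.mem_image, Set.mem_inter_iff, and_comm]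
    have h2 : (↑) '' {x : sW' | (x : Fin (n + 1) → ℂ) ∉ sW} = sW' \ sW := by
      ext x
      simp [Set.mem_image, Set.mem_diff, and_comm]
    rwa [h1, h2] at him
  have hdisj : Disjoint (Submodule.span ℂ sW) (Submodule.span ℂ (sW' \ sW)) := by
    rw [Submodule.disjoint_def]
    intro x hxW hx'
    have hxW' : x ∈ W' := by
      rw [← hsW'span]
      exact Submodule.span_mono Set.diff_subset hx'
    have hxU : x ∈ U := ⟨hsWspan ▸ hxW, hxW'⟩
    have hxint : x ∈ Submodule.span ℂ (sW' ∩ sW) := by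
      have : x ∈ Submodule.span ℂ sU := hUspan ▸ hxU
      exact Submodule.span_mono (fun y hy => Set.mem_inter (hUsW' hy) (hUsW hy)) this
    exact (Submodule.disjoint_def.1 hdisj2) x hxint hx'
  have hInd : LinearIndependent ℂ ((↑) : ↥(sW ∪ sW') → (Fin (n + 1) → ℂ)) := by
    have := LinearIndepOn.id_union hsWind (LinearIndepOn.mono hsW'ind Set.diff_subset) hdisj
    rwa [Set.union_diff_self] at this
  -- extend the union to a basis of M
  set bigSet : Set (Fin (n + 1) → ℂ) := LinearIndepOn.extend (v := id) hInd (Set.subset_univ _) with hbigSet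
  set B0 : Module.Basis ↥bigSet ℂ (Fin (n + 1) → ℂ) := Module.Basis.extend hInd with hB0
  haveI : Fintype ↥bigSet := FiniteDimensional.fintypeBasisIndex B0
  have hcard : Fintype.card ↥bigSet = n + 1 := by
    rw [← Module.finrank_eq_card_basis B0]
    simp [Module.finrank_fin_fun]
  set e : ↥bigSet ≃ Fin (n + 1) := Fintype.equivFinOfCardEq hcard with he
  set B : Module.Basis (Fin (n + 1)) ℂ (Fin (n + 1) → ℂ) := B0.reindex e with hB
  have hBval : ∀ j, (B j : Fin (n + 1) → ℂ) = ((e.symm j : ↥bigSet) : Fin (n + 1) → ℂ) := by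
    intro j
    rw [hB, Module.Basis.reindex_apply, hB0]
    exact Module.Basis.extend_apply_self hInd _
  have hBbig : ∀ j, (B j : Fin (n + 1) → ℂ) ∈ bigSet := fun j => by
    rw [hBval j]; exact (e.symm j).2
  have hmemB : ∀ x ∈ bigSet, ∃ j, B j = x := by
    intro x hx
    refine ⟨e ⟨x, hx⟩, ?_⟩
    rw [hBval, Equiv.symm_apply_apply]
  have hsub_big : sW ∪ sW' ⊆ bigSet := LinearIndepOn.subset_extend (v := id) hInd _
  -- index sets
  set I : Set (Fin (n + 1)) := {j | (B j : Fin (n + 1) → ℂ) ∈ sW} with hI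
  set I' : Set (Fin (n + 1)) := {j | (B j : Fin (n + 1) → ℂ) ∈ sW'} with hI'
  have hBI : B '' I = sW := by
    apply Set.Subset.antisymm
    · rintro x ⟨j, hj, rfl⟩; exact hj
    · intro x hx
      obtain ⟨j, hj⟩ := hmemB x (hsub_big (Set.mem_union_left _ hx))
      exact ⟨j, by rw [hI, Set.mem_setOf_eq, hj]; exact hx, hj⟩
  have hBI' : B '' I' = sW' := by
    apply Set.Subset.antisymm
    · rintro x ⟨j, hj, rfl⟩; exact hj
    · intro x hx
      obtain ⟨j, hj⟩ := hmemB x (hsub_big (Set.mem_union_right _ hx))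
      exact ⟨j, by rw [hI', Set.mem_setOf_eq, hj]; exact hx, hj⟩
  -- the change of variables
  set φ := (aeval (fun j => linStmt n (B j)) :
    MvPolynomial (Fin (n + 1)) ℂ →ₐ[ℂ] MvPolynomial (Fin (n + 1)) ℂ) with hφdef
  have hφinj : Function.Injective φ := phi_injective B
  -- membership of f in images of supported subalgebras
  have step : ∀ (S : Set (Fin (n + 1) → ℂ)) (II : Set (Fin (n + 1))) (WW : Submodule ℂ (Fin (n + 1) → ℂ))
      (ll : Fin r → MvPolynomial (Fin (n + 1)) ℂ) (vv : Fin r → (Fin (n + 1) → ℂ))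
      (gg : MvPolynomial (Fin r) ℂ),
      f = aeval ll gg → ll = linStmt n ∘ vv → Submodule.span ℂ (Set.range vv) = WW →
      Submodule.span ℂ S = WW → B '' II = S →
      f ∈ (supported ℂ II).map φ := by
    intro S II WW ll vv gg hfgg hllvv hspanvv hspanS hBII
    have hf1 : f ∈ Algebra.adjoin ℂ (Set.range ll) := by
      rw [Algebra.adjoin_range_eq_range_aeval ℂ ll]
      exact ⟨gg, hfgg.symm⟩
    have hf2 : f ∈ Algebra.adjoin ℂ (linStmt n '' (↑WW : Set (Fin (n + 1) → ℂ))) := by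
      refine Algebra.adjoin_mono ?_ hf1
      rintro x ⟨i, rfl⟩
      exact ⟨vv i, hspanvv ▸ Submodule.subset_span (Set.mem_range_self i), by rw [hllvv]; rfl⟩
    have hf3 : f ∈ Algebra.adjoin ℂ (linStmt n '' S) := by
      rw [← Algebra.adjoin_span (R := ℂ) (s := linStmt n '' S), ← Submodule.map_span, hspanS]
      refine Algebra.adjoin_mono ?_ hf2
      rintro x ⟨w, hw, rfl⟩
      exact ⟨w, hw, rfl⟩
    have himg : linStmt n '' S = φ '' (X '' II) := by
      rw [← hBII, ← Set.image_comp, ← Set.image_comp]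
      apply Set.image_congr
      intro j _
      simp [hφdef, Function.comp, aeval_X]
    rw [supported_eq_adjoin_X, AlgHom.map_adjoin, ← himg]
    exact hf3
  have hmem1 : f ∈ (supported ℂ I).map φ :=
    step sW I W l v g hfg hlv hW.symm hsWspan hBI
  have hmem2 : f ∈ (supported ℂ I').map φ :=
    step sW' I' W' l' v' g' hfg' hlv' hW'.symm hsW'span hBI'
  obtain ⟨p, hpmem, hpφ⟩ := hmem1
  obtain ⟨q, hqmem, hqφ⟩ := hmem2
  have hpq : p = q := hφinj (hpφ.trans hqφ.symm)
  have hpII' : p ∈ supported ℂ (I ∩ I') := by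
    rw [mem_supported]
    have h1 := mem_supported.1 hpmem
    have h2 := mem_supported.1 (hpq ▸ hqmem)
    exact Set.subset_inter h1 h2
  -- f lies in the subalgebra generated by the intersection U
  have hfU : f ∈ Algebra.adjoin ℂ (linStmt n '' sU) := by
    have hf4 : f ∈ Algebra.adjoin ℂ (φ '' (X '' (I ∩ I'))) := by
      rw [← AlgHom.map_adjoin, ← supported_eq_adjoin_X]
      exact ⟨p, hpII', hpφ⟩
    have himg2 : φ '' (X '' (I ∩ I')) ⊆ linStmt n '' (↑U : Set (Fin (n + 1) → ℂ)) := by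
      rintro x ⟨y, ⟨j, hj, rfl⟩, rfl⟩
      refine ⟨B j, ⟨hsWsub hj.1, hsW'sub hj.2⟩, ?_⟩
      simp [hφdef, aeval_X]
    have hf5 : f ∈ Algebra.adjoin ℂ (linStmt n '' (↑U : Set (Fin (n + 1) → ℂ))) :=
      Algebra.adjoin_mono himg2 hf4
    rw [← Algebra.adjoin_span (R := ℂ) (s := linStmt n '' sU), ← Submodule.map_span, hUspan]
    refine Algebra.adjoin_mono ?_ hf5
    rintro x ⟨w, hw, rfl⟩
    exact ⟨w, hw, rfl⟩
  -- enumerate sU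
  have hsUfin : sU.Finite := hsUind.setFinite
  haveI : Fintype ↥sU := hsUfin.fintype
  set s := Fintype.card ↥sU with hs
  set eU : ↥sU ≃ Fin s := Fintype.equivFin ↥sU with heU
  set m : Fin s → MvPolynomial (Fin (n + 1)) ℂ := fun i => linStmt n ((eU.symm i : ↥sU) : Fin (n + 1) → ℂ) with hm
  have hrangem : Set.range m = linStmt n '' sU := by
    ext x
    constructor
    · rintro ⟨i, rfl⟩
      exact ⟨_, (eU.symm i).2, rfl⟩
    · rintro ⟨y, hy, rfl⟩
      exact ⟨eU ⟨y, hy⟩, by rw [hm]; simp⟩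
  have hfm : ∃ g0 : MvPolynomial (Fin s) ℂ, aeval m g0 = f := by
    have : f ∈ Algebra.adjoin ℂ (Set.range m) := by rw [hrangem]; exact hfU
    rwa [Algebra.adjoin_range_eq_range_aeval ℂ m] at this
  obtain ⟨g0, hg0⟩ := hfm
  obtain ⟨g1, hg1hom, hg1⟩ := exists_homog_g m (fun i => linStmt_isHomogeneous _) hfhom g0 hg0.symm
  -- s is in the set, so r ≤ s
  have hsmem : s ∈ {s : ℕ | ∃ l : Fin s → MvPolynomial (Fin (n + 1)) ℂ,
      (∀ i, (l i).IsHomogeneous 1) ∧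
      ∃ g : MvPolynomial (Fin s) ℂ, g.IsHomogeneous d ∧ f = aeval l g} :=
    ⟨m, fun i => linStmt_isHomogeneous _, g1, hg1hom, hg1⟩
  have hrs : r ≤ s := hr.2 hsmem
  -- finrank computations
  have hfinU : Module.finrank ℂ U = s := by
    rw [← hUspan, finrank_span_set_eq_card hsUind, Set.toFinset_card]
  have hfinW : Module.finrank ℂ W = r := by
    rw [hW, finrank_span_eq_card hvi, Fintype.card_fin]
  have hfinW' : Module.finrank ℂ W' = r := by
    rw [hW', finrank_span_eq_card hvi', Fintype.card_fin]
  have hUW : U = W := by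
    apply Submodule.eq_of_le_of_finrank_le inf_le_left
    rw [hfinU, hfinW]
    exact hrs
  have hUW' : U = W' := by
    apply Submodule.eq_of_le_of_finrank_le inf_le_right
    rw [hfinU, hfinW']
    exact hrs
  rw [← hUW, ← hUW']
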